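/- Let v ∈ ℤ_+^{n-1} be strictly increasing, r + s - 2 ≤ n - 1, and x a binary vector of length s with x_s = 1. Then g_v(r, x) ≤ 0, with equality if and only if x is the all-ones vector. -/
import Mathlib


def gfun (v : ℕ → ℤ) (r s : ℕ) (x : ℕ → ℤ) : ℤ :=
  x 1 * v r - x s * v (r + s - 2) +
    ∑ t ∈ Finset.Icc 2 (s - 1), x t * (v (t + r - 1) - v (t + r - 2))

theorem stmt3 (n r s : ℕ) (v x : ℕ → ℤ)
    (hn : 2 ≤ n) (hr : 1 ≤ r) (hs : 2 ≤ s) (hrs : r + s - 2 ≤ n - 1)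
    (hpos : ∀ i, 1 ≤ i → i ≤ n - 1 → 0 < v i)
    (hinc : ∀ i j, 1 ≤ i → i < j → j ≤ n - 1 → v i < v j)
    (hbin : ∀ t, 1 ≤ t → t ≤ s → x t = 0 ∨ x t = 1)
    (hxs : x s = 1) :
    gfun v r s x ≤ 0 ∧
      (gfun v r s x = 0 ↔ ∀ t, 1 ≤ t → t ≤ s → x t = 1) := by
  obtain ⟨m, rfl⟩ : ∃ m, s = m + 2 := ⟨s - 2, by omega⟩
  obtain ⟨q, rfl⟩ : ∃ q, r = q + 1 := ⟨r - 1, by omega⟩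
  set c : ℕ → ℤ := fun t => if t = 1 then v (q + 1) else v (t + q) - v (t + q - 1) with hc
  have hcpos : ∀ t, 1 ≤ t → t ≤ m + 1 → 0 < c t := by
    intro t h1 h2
    by_cases ht : t = 1
    · simp [hc, ht]
      exact hpos (q + 1) (by omega) (by omega)
    · simp only [hc, if_neg ht]
      have := hinc (t + q - 1) (t + q) (by omega) (by omega) (by omega)
      omega
  have hsum : ∀ M, 1 ≤ M → ∑ t ∈ Finset.Icc 1 M, c t = v (q + M) := by
    intro M hM
    induction M with
    | zero => omega
    | succ k ih =>
      rcases Nat.eq_zero_or_pos k with hk | hk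
      · subst hk; simp [hc]
      · rw [Finset.sum_Icc_succ_top (by omega : 1 ≤ k + 1), ih hk]
        have hk1 : k + 1 ≠ 1 := by omega
        simp only [hc, if_neg hk1]
        have : k + 1 + q - 1 = q + k := by omega
        rw [this, (by omega : k + 1 + q = q + (k + 1))]
        ring
  have key : gfun v (q + 1) (m + 2) x = ∑ t ∈ Finset.Icc 1 (m + 1), (x t - 1) * c t := by
    have h1 : Finset.Icc 1 (m + 1) = insert 1 (Finset.Icc 2 (m + 1)) := by
      ext a; simp [Finset.mem_Icc]; omega
    have hsplit : ∀ f : ℕ → ℤ, ∑ t ∈ Finset.Icc 1 (m + 1), f t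
        = f 1 + ∑ t ∈ Finset.Icc 2 (m + 1), f t := by
      intro f
      rw [h1, Finset.sum_insert (by simp)]
    have hs1 : ∑ t ∈ Finset.Icc 1 (m + 1), (x t - 1) * c t
        = ∑ t ∈ Finset.Icc 1 (m + 1), x t * c t - ∑ t ∈ Finset.Icc 1 (m + 1), c t := by
      rw [← Finset.sum_sub_distrib]
      apply Finset.sum_congr rfl
      intro t _; ring
    rw [hs1, hsum (m + 1) (by omega), hsplit (fun t => x t * c t)]
    simp only [hc, if_pos rfl]
    unfold gfun
    have e1 : m + 2 - 1 = m + 1 := by omega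
    have e2 : q + 1 + (m + 2) - 2 = q + (m + 1) := by omega
    rw [e1, e2, hxs]
    have hcong : ∑ t ∈ Finset.Icc 2 (m + 1), x t * (v (t + (q + 1) - 1) - v (t + (q + 1) - 2))
        = ∑ t ∈ Finset.Icc 2 (m + 1), x t * (if t = 1 then v (q + 1) else v (t + q) - v (t + q - 1)) := by
      apply Finset.sum_congr rfl
      intro t ht
      simp only [Finset.mem_Icc] at ht
      rw [if_neg (by omega : t ≠ 1)]
      congr 2 <;> omega
    rw [hcong]
    ring
  have hterm : ∀ t ∈ Finset.Icc 1 (m + 1), (x t - 1) * c t ≤ 0 := by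
    intro t ht
    simp only [Finset.mem_Icc] at ht
    have hb := hbin t (by omega) (by omega)
    have hcp := hcpos t (by omega) (by omega)
    rcases hb with h | h <;> rw [h] <;> nlinarith
  constructor
  · rw [key]; exact Finset.sum_nonpos hterm
  · constructor
    · intro hg t h1 h2
      rcases Nat.lt_or_ge t (m + 2) with h | h
      · rw [key] at hg
        have := (Finset.sum_eq_zero_iff_of_nonpos hterm).mp hg t (by simp [Finset.mem_Icc]; omega)
        have hcp := hcpos t (by omega) (by omega)
        rcases mul_eq_zero.mp this with h' | h'
        · omega
        · omega
      · have : t = m + 2 := by omega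
        rw [this]; exact hxs
    · intro hall
      rw [key]
      apply Finset.sum_eq_zero
      intro t ht
      simp only [Finset.mem_Icc] at ht
      rw [hall t (by omega) (by omega)]
      ring
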